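/- Every sequence recognized by a polynomially ambiguous weighted automaton over a unary alphabet belongs to PolyRat. -/

import Mathlib

/-- The smallest class of sequences `ℕ → ℚ` containing all arithmetic and all geometric
sequences and closed under sum, Hadamard product, shift, and `k`-ary shuffle for `k ≥ 1`. -/
inductive PolyRat : (ℕ → ℚ) → Prop where
  | arith (a b : ℚ) (u : ℕ → ℚ) (h0 : u 0 = a) (hs : ∀ n, u (n + 1) = u n + b) : PolyRat u
  | geo (a l : ℚ) (u : ℕ → ℚ) (h0 : u 0 = a) (hs : ∀ n, u (n + 1) = l * u n) : PolyRat u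
  | sum (u v : ℕ → ℚ) (hu : PolyRat u) (hv : PolyRat v) : PolyRat (fun n => u n + v n)
  | had (u v : ℕ → ℚ) (hu : PolyRat u) (hv : PolyRat v) : PolyRat (fun n => u n * v n)
  | shift (a : ℚ) (u w : ℕ → ℚ) (hu : PolyRat u) (h0 : w 0 = a)
      (hs : ∀ n, w (n + 1) = u n) : PolyRat w
  | shuffle (k : ℕ) (hk : 1 ≤ k) (us : Fin k → ℕ → ℚ) (w : ℕ → ℚ)
      (hw : ∀ (n : ℕ) (i : Fin k), w (k * n + (i : ℕ)) = us i n)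
      (hus : ∀ i, PolyRat (us i)) : PolyRat w

/-- The weighted automaton with states `Fin d`, transition matrix `M`, initial vector `I`
and final vector `F` recognizes the sequence `u`, i.e. `u n = Iᵀ · Mⁿ · F`. -/
def Recognizes {d : ℕ} (M : Matrix (Fin d) (Fin d) ℚ) (I F : Fin d → ℚ) (u : ℕ → ℚ) : Prop :=
  ∀ n : ℕ, u n = dotProduct I ((M ^ n).mulVec F)

/-- `r` is an accepting run of length `n` of the weighted automaton `(Fin d, M, I, F)`. -/
def AcceptingRun {d : ℕ} (M : Matrix (Fin d) (Fin d) ℚ) (I F : Fin d → ℚ) (n : ℕ)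
    (r : Fin (n + 1) → Fin d) : Prop :=
  I (r 0) ≠ 0 ∧ F (r (Fin.last n)) ≠ 0 ∧ ∀ i : Fin n, M (r i.castSucc) (r i.succ) ≠ 0

/-- The ambiguity of a weighted automaton: the number of accepting runs of length `n`. -/
noncomputable def ambiguity {d : ℕ} (M : Matrix (Fin d) (Fin d) ℚ) (I F : Fin d → ℚ)
    (n : ℕ) : ℕ :=
  Nat.card {r : Fin (n + 1) → Fin d // AcceptingRun M I F n r}

/-- A weighted automaton is polynomially ambiguous if its ambiguity is bounded by a
polynomial in the input length. -/
def PolyAmbiguous {d : ℕ} (M : Matrix (Fin d) (Fin d) ℚ) (I F : Fin d → ℚ) : Prop :=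
  ∃ P : Polynomial ℕ, ∀ n : ℕ, ambiguity M I F n ≤ P.eval n


open Polynomial Finset

def EPbasis : Set (ℕ → ℚ) := {f | ∃ (p : Polynomial ℚ) (c : ℚ), f = fun (n : ℕ) => p.eval (n:ℚ) * c ^ n}

def EPspan : Submodule ℚ (ℕ → ℚ) := Submodule.span ℚ EPbasis

/-- eventually an exponential polynomial -/
def EP (f : ℕ → ℚ) : Prop := ∃ g ∈ EPspan, ∃ N : ℕ, ∀ n ≥ N, f n = g n

lemma EP_zero : EP (fun _ => (0:ℚ)) := ⟨0, Submodule.zero_mem _, 0, fun _ _ => rfl⟩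

lemma EP_congr {f g : ℕ → ℚ} (hf : EP f) (h : ∀ n, g n = f n) : EP g := by
  obtain ⟨G, hG, N, hN⟩ := hf
  exact ⟨G, hG, N, fun n hn => (h n).trans (hN n hn)⟩

lemma EP_add {f g : ℕ → ℚ} (hf : EP f) (hg : EP g) : EP (fun n => f n + g n) := by
  obtain ⟨G, hG, N, hN⟩ := hf
  obtain ⟨H, hH, N', hN'⟩ := hg
  refine ⟨G + H, Submodule.add_mem _ hG hH, max N N', fun n hn => ?_⟩
  have h1 := hN n (le_trans (le_max_left _ _) hn)
  have h2 := hN' n (le_trans (le_max_right _ _) hn)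
  simp [Pi.add_apply, h1, h2]

lemma EP_smul {f : ℕ → ℚ} (c : ℚ) (hf : EP f) : EP (fun n => c * f n) := by
  obtain ⟨G, hG, N, hN⟩ := hf
  refine ⟨c • G, Submodule.smul_mem _ c hG, N, fun n hn => ?_⟩
  simp [hN n hn]

lemma EP_mul_const {f : ℕ → ℚ} (c : ℚ) (hf : EP f) : EP (fun n => f n * c) :=
  EP_congr (EP_smul c hf) (fun n => mul_comm _ _)

lemma EP_basis_mem (p : Polynomial ℚ) (c : ℚ) : EP (fun n => p.eval (n:ℚ) * c ^ n) :=
  ⟨_, Submodule.subset_span ⟨p, c, rfl⟩, 0, fun _ _ => rfl⟩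

lemma EP_geo (c : ℚ) : EP (fun n => c ^ n) := by
  have := EP_basis_mem 1 c
  simpa using this

lemma EP_const (c : ℚ) : EP (fun _ => c) := by
  have := EP_basis_mem (C c) 1
  simpa using this

lemma EP_finsum {α : Type*} (s : Finset α) (f : α → ℕ → ℚ) (h : ∀ a ∈ s, EP (f a)) :
    EP (fun n => ∑ a ∈ s, f a n) := by
  classical
  induction s using Finset.induction_on with
  | empty => simpa using EP_zero
  | insert a s hx ih =>
    have h1 : EP (f a) := h a (mem_insert_self a s)
    have h2 : EP (fun n => ∑ b ∈ s, f b n) := ih (fun b hb => h b (mem_insert_of_mem hb))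
    exact EP_congr (EP_add h1 h2) (fun n => by rw [Finset.sum_insert hx])

/-! ### solving the recurrence at polynomial level -/

noncomputable def Tmap (c a : ℚ) (q : Polynomial ℚ) : Polynomial ℚ :=
  c • q.comp (X + 1) - a • q

lemma Tmap_add (c a : ℚ) (q₁ q₂ : Polynomial ℚ) :
    Tmap c a (q₁ + q₂) = Tmap c a q₁ + Tmap c a q₂ := by
  simp [Tmap, add_comp]; ring

lemma Tmap_coeff (c a γ : ℚ) (m j : ℕ) :
    (Tmap c a (C γ * X ^ m)).coeff j
      = γ * (c * (m.choose j) - a * (if j = m then 1 else 0)) := by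
  by_cases h : j = m <;>
    simp [Tmap, mul_comp, pow_comp, coeff_smul, coeff_C_mul, coeff_X_add_one_pow,
      coeff_X_pow, smul_eq_mul, h] <;> ring

lemma poly_solve (c a : ℚ) (hc : c ≠ 0) :
    ∀ (k : ℕ) (p : Polynomial ℚ), p.natDegree ≤ k →
      ∃ q : Polynomial ℚ, Tmap c a q = p := by
  -- the "top term killer"
  have main : ∀ (m : ℕ) (γ : ℚ), ∃ q₁ : Polynomial ℚ,
      (∀ j, m < j → (Tmap c a q₁).coeff j = 0) ∧ (Tmap c a q₁).coeff m = γ := by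
    intro m γ
    by_cases hca : c = a
    · refine ⟨C (γ / (c * (m + 1))) * X ^ (m + 1), fun j hj => ?_, ?_⟩
      · rw [Tmap_coeff]
        rcases eq_or_lt_of_le (Nat.succ_le_of_lt hj) with h | h
        · subst hca; rw [← h]; simp
        · have h1 : (m+1).choose j = 0 := Nat.choose_eq_zero_of_lt h
          have h2 : j ≠ m + 1 := Nat.ne_of_gt h
          simp [h1, h2]
      · rw [Tmap_coeff]
        have h2 : m ≠ m + 1 := by omega
        have h3 : (m+1).choose m = m + 1 := Nat.choose_succ_self_right m
        have hne : c * ((m:ℚ) + 1) ≠ 0 := by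
          apply mul_ne_zero hc
          positivity
        field_simp [h2, h3]
        rw [if_neg h2, h3]; push_cast; ring
    · refine ⟨C (γ / (c - a)) * X ^ m, fun j hj => ?_, ?_⟩
      · rw [Tmap_coeff]
        have h1 : m.choose j = 0 := Nat.choose_eq_zero_of_lt hj
        have h2 : j ≠ m := Nat.ne_of_gt hj
        simp [h1, h2]
      · rw [Tmap_coeff]
        have hca' : c - a ≠ 0 := sub_ne_zero.mpr hca
        field_simp
        simp
  intro k
  induction k with
  | zero =>
    intro p hp
    obtain ⟨q₁, hhigh, htop⟩ := main 0 (p.coeff 0)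
    refine ⟨q₁, ?_⟩
    ext j
    rcases Nat.eq_zero_or_pos j with h | h
    · subst h; exact htop
    · rw [hhigh j h, Polynomial.coeff_eq_zero_of_natDegree_lt (lt_of_le_of_lt hp h)]
  | succ k ih =>
    intro p hp
    obtain ⟨q₁, hhigh, htop⟩ := main (k+1) (p.coeff (k+1))
    have hr : (p - Tmap c a q₁).natDegree ≤ k := by
      rw [Polynomial.natDegree_le_iff_coeff_eq_zero]
      intro j hj
      rcases eq_or_lt_of_le (Nat.succ_le_of_lt hj) with h | h
      · rw [Polynomial.coeff_sub, ← h, htop, sub_self]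
      · rw [Polynomial.coeff_sub, hhigh j h,
          Polynomial.coeff_eq_zero_of_natDegree_lt (lt_of_le_of_lt hp h), sub_self]
    obtain ⟨q₂, hq₂⟩ := ih _ hr
    exact ⟨q₁ + q₂, by rw [Tmap_add, hq₂]; ring⟩

lemma EPspan_solution {a : ℚ} : ∀ g ∈ EPspan, ∃ G ∈ EPspan, ∃ N : ℕ,
    ∀ n ≥ N, G (n+1) = a * G n + g n := by
  intro g hg
  induction hg using Submodule.span_induction with
  | mem x hx =>
    obtain ⟨p, c, rfl⟩ := hx
    by_cases hc : c = 0
    · refine ⟨0, Submodule.zero_mem _, 1, fun n hn => ?_⟩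
      subst hc
      have hn0 : n ≠ 0 := by omega
      simp [zero_pow hn0]
    · obtain ⟨q, hq⟩ := poly_solve c a hc p.natDegree p le_rfl
      refine ⟨fun n : ℕ => q.eval (n:ℚ) * c ^ n, Submodule.subset_span ⟨q, c, rfl⟩,
        0, fun n _ => ?_⟩
      have hev : c * q.eval ((n:ℚ) + 1) - a * q.eval (n:ℚ) = p.eval (n:ℚ) := by
        have := congrArg (Polynomial.eval (n:ℚ)) hq
        simpa [Tmap, eval_comp] using this
      have : c * q.eval ((n:ℚ) + 1) = a * q.eval (n:ℚ) + p.eval (n:ℚ) := by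
        linarith [hev]
      calc q.eval ((n+1 : ℕ):ℚ) * c ^ (n+1)
          = (c * q.eval ((n:ℚ)+1)) * c ^ n := by push_cast; ring
        _ = (a * q.eval (n:ℚ) + p.eval (n:ℚ)) * c ^ n := by rw [this]
        _ = a * (q.eval (n:ℚ) * c ^ n) + p.eval (n:ℚ) * c ^ n := by ring
  | zero => exact ⟨0, Submodule.zero_mem _, 0, fun n _ => by simp⟩
  | add x y hx hy ihx ihy =>
    obtain ⟨G₁, hG₁, N₁, h₁⟩ := ihx
    obtain ⟨G₂, hG₂, N₂, h₂⟩ := ihy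
    refine ⟨G₁ + G₂, Submodule.add_mem _ hG₁ hG₂, max N₁ N₂, fun n hn => ?_⟩
    have e1 := h₁ n (le_trans (le_max_left _ _) hn)
    have e2 := h₂ n (le_trans (le_max_right _ _) hn)
    simp only [Pi.add_apply, e1, e2]; ring
  | smul r x hx ihx =>
    obtain ⟨G, hG, N, h₁⟩ := ihx
    refine ⟨r • G, Submodule.smul_mem _ r hG, N, fun n hn => ?_⟩
    simp only [Pi.smul_apply, smul_eq_mul, h₁ n hn]; ring

lemma EP_resolvent {a : ℚ} {f h : ℕ → ℚ} (hrec : ∀ n, f (n+1) = a * f n + h n)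
    (hh : EP h) : EP f := by
  obtain ⟨g, hg, N₀, hN₀⟩ := hh
  obtain ⟨G, hG, N₁, hN₁⟩ := EPspan_solution g hg
  set N := max N₀ N₁ with hNdef
  have he : ∀ n ≥ N, (f (n+1) - G (n+1)) = a * (f n - G n) := by
    intro n hn
    have h1 := hrec n
    have h2 := hN₁ n (le_trans (le_max_right _ _) hn)
    have h3 := hN₀ n (le_trans (le_max_left _ _) hn)
    rw [h1, h2, h3]; ring
  by_cases ha : a = 0
  · refine ⟨G, hG, N + 1, fun n hn => ?_⟩
    obtain ⟨m, rfl⟩ : ∃ m, n = m + 1 := ⟨n - 1, by omega⟩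
    have := he m (by omega)
    rw [ha] at this
    have : f (m+1) - G (m+1) = 0 := by rw [this]; ring
    linarith
  · have key : ∀ m : ℕ, f (N + m) - G (N + m) = (f N - G N) * a ^ m := by
      intro m
      induction m with
      | zero => simp
      | succ m ih =>
        have := he (N + m) (by omega)
        rw [show N + (m+1) = (N + m) + 1 by ring, this, ih]; ring
    set c : ℚ := (f N - G N) / a ^ N with hc
    refine ⟨G + c • (fun n : ℕ => a ^ n), Submodule.add_mem _ hG
      (Submodule.smul_mem _ _ (Submodule.subset_span ⟨1, a, by funext n; simp⟩)),
      N, fun n hn => ?_⟩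
    obtain ⟨m, rfl⟩ : ∃ m, n = N + m := ⟨n - N, by omega⟩
    have hpow : a ^ (N + m) = a ^ N * a ^ m := pow_add a N m
    have hA : a ^ N ≠ 0 := pow_ne_zero _ ha
    have := key m
    simp only [Pi.add_apply, Pi.smul_apply, smul_eq_mul]
    have hcc : c * a ^ (N+m) = (f N - G N) * a ^ m := by
      rw [hpow, hc]; field_simp
    rw [hpow] at hcc ⊢
    linarith [key m, hcc]

/-! ### EP implies PolyRat -/

lemma polyRat_finsupp : ∀ (N : ℕ) (e : ℕ → ℚ), (∀ n ≥ N, e n = 0) → PolyRat e := by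
  intro N
  induction N with
  | zero =>
    intro e he
    exact PolyRat.arith 0 0 e (he 0 le_rfl) (fun n => by rw [he n (by omega), he (n+1) (by omega)]; ring)
  | succ N ih =>
    intro e he
    exact PolyRat.shift (e 0) (fun n => e (n+1)) e
      (ih _ (fun n hn => he (n+1) (by omega))) rfl (fun n => rfl)

lemma polyRat_nat : PolyRat (fun n : ℕ => (n : ℚ)) :=
  PolyRat.arith 0 1 _ (by simp) (fun n => by push_cast; ring)

lemma polyRat_const (c : ℚ) : PolyRat (fun _ : ℕ => c) :=
  PolyRat.arith c 0 _ rfl (fun n => by ring)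

lemma polyRat_geo (c : ℚ) : PolyRat (fun n : ℕ => c ^ n) :=
  PolyRat.geo 1 c _ (pow_zero c) (fun n => by rw [pow_succ]; ring)

lemma polyRat_monomial (a : ℚ) : ∀ k : ℕ, PolyRat (fun n : ℕ => a * (n:ℚ) ^ k) := by
  intro k
  induction k with
  | zero => exact PolyRat.arith a 0 _ (by simp) (fun n => by simp)
  | succ k ih =>
    have h := PolyRat.had _ _ ih polyRat_nat
    have he : (fun n : ℕ => (a * (n:ℚ) ^ k) * (n:ℚ)) = fun n : ℕ => a * (n:ℚ) ^ (k+1) := by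
      funext n; ring
    rwa [he] at h

lemma polyRat_polyeval (p : Polynomial ℚ) : PolyRat (fun n : ℕ => p.eval (n:ℚ)) := by
  induction p using Polynomial.induction_on' with
  | add p q hp hq =>
    have := PolyRat.sum _ _ hp hq
    have he : (fun n : ℕ => p.eval (n:ℚ) + q.eval (n:ℚ)) = fun n : ℕ => (p+q).eval (n:ℚ) := by
      funext n; simp
    rwa [he] at this
  | monomial k a =>
    have := polyRat_monomial a k
    have he : (fun n : ℕ => a * (n:ℚ) ^ k) = fun n : ℕ => ((monomial k) a).eval (n:ℚ) := by
      funext n; simp [eval_monomial]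
    rwa [he] at this

lemma polyRat_span : ∀ g ∈ EPspan, PolyRat g := by
  intro g hg
  induction hg using Submodule.span_induction with
  | mem x hx =>
    obtain ⟨p, c, rfl⟩ := hx
    exact PolyRat.had _ _ (polyRat_polyeval p) (polyRat_geo c)
  | zero => exact polyRat_const 0
  | add x y hx hy ihx ihy => exact PolyRat.sum x y ihx ihy
  | smul r x hx ihx =>
    have h := PolyRat.had _ _ (polyRat_const r) ihx
    have : (fun n => r * x n) = r • x := by funext n; simp [smul_eq_mul]
    rwa [this] at h

lemma EP_polyRat {f : ℕ → ℚ} (hf : EP f) : PolyRat f := by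
  classical
  obtain ⟨g, hg, N, hN⟩ := hf
  set e : ℕ → ℚ := fun n => if n < N then f n - g n else 0 with hedef
  have hePR : PolyRat e := polyRat_finsupp N e (fun n hn => by simp [hedef, Nat.not_lt.mpr hn])
  have h := PolyRat.sum _ _ (polyRat_span g hg) hePR
  have : (fun n => g n + e n) = f := by
    funext n
    by_cases hn : n < N
    · simp [hedef, hn]
    · simp [hedef, hn, hN n (Nat.not_lt.mp hn)]
  rwa [this] at h


lemma nat_poly_lt_two_pow (R : Polynomial ℕ) : ∃ k, 1 ≤ k ∧ R.eval k < 2 ^ k := by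
  set D := R.natDegree with hD
  set C := ∑ i ∈ Finset.range (D+1), R.coeff i with hC
  have hbound : ∀ k : ℕ, R.eval k ≤ C * (k+1)^D := by
    intro k
    rw [Polynomial.eval_eq_sum_range, hC, Finset.sum_mul]
    apply Finset.sum_le_sum
    intro i hi
    have h1 : k ^ i ≤ (k+1) ^ D :=
      le_trans (Nat.pow_le_pow_left (Nat.le_succ k) i)
        (Nat.pow_le_pow_right (by omega) (by simpa using Nat.lt_succ_iff.mp (Finset.mem_range.mp hi)))
    exact Nat.mul_le_mul_left _ h1
  set t := C + 2*(D+1) with ht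
  set s := 2*t with hs
  refine ⟨2^s, Nat.one_le_two_pow, ?_⟩
  have key1 : C + (s+1)*D ≤ t^2 := by
    have e1 : t*t = C*t + 2*D*t + 2*t := by rw [ht]; ring
    have e2 : C ≤ C*t := Nat.le_mul_of_pos_right C (by omega)
    have e3 : D ≤ 2*t := by omega
    rw [hs, pow_two]
    nlinarith [e1, e2, e3]
  have key2 : t^2 < 2^s := by
    have := Nat.lt_two_pow_self (n := t)
    calc t^2 < (2^t)^2 := Nat.pow_lt_pow_left this (by norm_num)
      _ = 2^s := by rw [← pow_mul, hs, Nat.mul_comm]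
  calc R.eval (2^s) ≤ C * (2^s+1)^D := hbound _
    _ ≤ 2^C * (2^(s+1))^D := by
        apply Nat.mul_le_mul (Nat.le_of_lt (Nat.lt_two_pow_self (n := C)))
        apply Nat.pow_le_pow_left
        have : (1:ℕ) ≤ 2^s := Nat.one_le_two_pow
        rw [pow_succ]
        omega
    _ = 2^(C + (s+1)*D) := by rw [← pow_mul, ← pow_add]
    _ < 2^(2^s) := Nat.pow_lt_pow_right (by norm_num) (lt_of_le_of_lt key1 key2)

lemma nat_poly_lt_two_pow' (P : Polynomial ℕ) (a b : ℕ) :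
    ∃ k, 1 ≤ k ∧ P.eval (a + k * b) < 2 ^ k := by
  obtain ⟨k, hk, h⟩ := nat_poly_lt_two_pow (P.comp (Polynomial.C a + Polynomial.C b * Polynomial.X))
  refine ⟨k, hk, ?_⟩
  rw [Polynomial.eval_comp] at h
  simpa [Nat.mul_comm] using h

/-! ### Automaton combinatorics -/

section Auto

open Finset

attribute [local instance] Classical.propDecidable

variable {d : ℕ} (M : Matrix (Fin d) (Fin d) ℚ) (I F : Fin d → ℚ)

/-- a walk of length `n` from `q` to `p` along nonzero entries of `M` -/
def AWalk (q p : Fin d) (n : ℕ) : Prop :=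
  ∃ w : ℕ → Fin d, w 0 = q ∧ w n = p ∧ ∀ i < n, M (w i) (w (i+1)) ≠ 0

def AReach (q p : Fin d) : Prop := ∃ n, AWalk M q p n

lemma AReach.refl (q : Fin d) : AReach M q q :=
  ⟨0, fun _ => q, rfl, rfl, fun i h => absurd h (Nat.not_lt_zero i)⟩

lemma AWalk.trans {q p r : Fin d} {m n : ℕ} (h1 : AWalk M q p m) (h2 : AWalk M p r n) :
    AWalk M q r (m + n) := by
  obtain ⟨w1, hw10, hw1m, hw1s⟩ := h1
  obtain ⟨w2, hw20, hw2n, hw2s⟩ := h2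
  refine ⟨fun i => if i ≤ m then w1 i else w2 (i - m), by simp [hw10], ?_, ?_⟩
  · by_cases h : n = 0
    · subst h; simp [hw1m, ← hw20, ← hw2n]
    · have : ¬ (m + n ≤ m) := by omega
      simp [this, hw2n]
  · intro i hi
    by_cases h1 : i + 1 ≤ m
    · have h2 : i ≤ m := by omega
      simpa [h1, h2] using hw1s i (by omega)
    · by_cases h2 : i ≤ m
      · have : i = m := by omega
        subst this
        have : ¬ (i + 1 ≤ i) := by omega
        simpa [this, h2, hw1m, ← hw20] using hw2s 0 (by omega)
      · have h3 : ¬ (i + 1 ≤ m) := by omega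
        have h4 : i + 1 - m = (i - m) + 1 := by omega
        simpa [h2, h3, h4] using hw2s (i - m) (by omega)

lemma AReach.trans {q p r : Fin d} (h1 : AReach M q p) (h2 : AReach M p r) :
    AReach M q r := by
  obtain ⟨m, hm⟩ := h1; obtain ⟨n, hn⟩ := h2; exact ⟨m + n, hm.trans M hn⟩

lemma AReach.step {q p : Fin d} (h : M q p ≠ 0) : AReach M q p := by
  refine ⟨1, fun i => if i = 0 then q else p, by simp, by simp, ?_⟩
  intro i hi
  have : i = 0 := by omega
  subst this; simpa using h

lemma AWalk.single {q p : Fin d} (h : M q p ≠ 0) : AWalk M q p 1 := by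
  refine ⟨fun i => if i = 0 then q else p, by simp, by simp, fun i hi => ?_⟩
  have : i = 0 := by omega
  subst this; simpa using h

/-- trim states: reachable from the initial support and co-reachable to the final support -/
def Trim (q : Fin d) : Prop :=
  (∃ q0, I q0 ≠ 0 ∧ AReach M q0 q) ∧ (∃ qf, F qf ≠ 0 ∧ AReach M q qf)

lemma Trim.of_reach {q p : Fin d} (hq : Trim M I F q) (h1 : AReach M q p) (h2 : AReach M p q) :
    Trim M I F p :=
  ⟨⟨hq.1.choose, hq.1.choose_spec.1, hq.1.choose_spec.2.trans M h1⟩,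
   ⟨hq.2.choose, hq.2.choose_spec.1, (h2.trans M hq.2.choose_spec.2)⟩⟩

/-- the matrix restricted to trim states -/
noncomputable def Ntrim : Matrix (Fin d) (Fin d) ℚ :=
  Matrix.of fun a b => if Trim M I F a ∧ Trim M I F b then M a b else 0

lemma Ntrim_le (a b : Fin d) (h : Ntrim M I F a b ≠ 0) : M a b ≠ 0 := by
  by_contra h0
  apply h
  simp [Ntrim, h0]

lemma Ntrim_trim {a b : Fin d} (h : Ntrim M I F a b ≠ 0) : Trim M I F a ∧ Trim M I F b := by
  by_contra h0
  apply h
  simp [Ntrim]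
  intro h1 h2
  exact absurd ⟨h1, h2⟩ h0

/-- nonzero entries of powers give walks -/
lemma pow_walk (A : Matrix (Fin d) (Fin d) ℚ) (hA : ∀ a b, A a b ≠ 0 → M a b ≠ 0) :
    ∀ (n : ℕ) (q p : Fin d), (A ^ n) q p ≠ 0 → AWalk M q p n := by
  intro n
  induction n with
  | zero =>
    intro q p h
    have : q = p := by
      by_contra hne
      apply h
      simp [Matrix.one_apply, hne]
    subst this
    exact ⟨fun _ => q, rfl, rfl, fun i hi => absurd hi (Nat.not_lt_zero i)⟩
  | succ n ih =>
    intro q p h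
    rw [pow_succ, Matrix.mul_apply] at h
    obtain ⟨p', -, hp'⟩ := Finset.exists_ne_zero_of_sum_ne_zero h
    have h1 : (A ^ n) q p' ≠ 0 := fun h0 => hp' (by rw [h0, zero_mul])
    have h2 : A p' p ≠ 0 := fun h0 => hp' (by rw [h0, mul_zero])
    exact (ih q p' h1).trans M (AWalk.single M (hA _ _ h2))

lemma Ntrim_pow_row_zero {n : ℕ} (hn : 1 ≤ n) {q : Fin d} (hq : ¬ Trim M I F q) (p : Fin d) :
    ((Ntrim M I F) ^ n) q p = 0 := by
  obtain ⟨m, rfl⟩ : ∃ m, n = 1 + m := ⟨n - 1, by omega⟩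
  rw [pow_add, pow_one, Matrix.mul_apply]
  apply Finset.sum_eq_zero
  intro x _
  have : Ntrim M I F q x = 0 := by
    by_contra h
    exact hq (Ntrim_trim M I F h).1
  rw [this, zero_mul]

/-- powers of `M` and of the trim restriction agree between trim states -/
lemma pow_trim_eq : ∀ (n : ℕ) {q p : Fin d}, Trim M I F q → Trim M I F p →
    (M ^ n) q p = ((Ntrim M I F) ^ n) q p := by
  intro n
  induction n with
  | zero => intro q p _ _; rfl
  | succ n ih =>
    intro q p hq hp
    rw [pow_succ, pow_succ, Matrix.mul_apply, Matrix.mul_apply]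
    apply Finset.sum_congr rfl
    intro x _
    by_cases hx : Trim M I F x
    · rw [ih hq hx]
      have : Ntrim M I F x p = M x p := by simp [Ntrim, hx, hp]
      rw [this]
    · have h2 : Ntrim M I F x p = 0 := by
        by_contra h
        exact hx (Ntrim_trim M I F h).1
      rw [h2, mul_zero]
      -- M-side term is zero too
      by_cases h3 : M x p = 0
      · rw [h3, mul_zero]
      · have h4 : (M ^ n) q x = 0 := by
          by_contra h5
          apply hx
          have hwx : AReach M q x := ⟨n, pow_walk M M (fun _ _ h => h) n q x h5⟩
          have hxp : AReach M x p := AReach.step M h3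
          exact ⟨⟨hq.1.choose, hq.1.choose_spec.1, hq.1.choose_spec.2.trans M hwx⟩,
            ⟨hp.2.choose, hp.2.choose_spec.1, hxp.trans M hp.2.choose_spec.2⟩⟩
        rw [h4, zero_mul]

/-- restricted initial and final vectors -/
noncomputable def Itrim : Fin d → ℚ := fun q => if Trim M I F q then I q else 0
noncomputable def Ftrim : Fin d → ℚ := fun q => if Trim M I F q then F q else 0

lemma u_rep {u : ℕ → ℚ} (hrec : Recognizes M I F u) (n : ℕ) :
    u n = ∑ q : Fin d, ∑ p : Fin d,
      Itrim M I F q * ((Ntrim M I F) ^ n) q p * Ftrim M I F p := by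
  rw [hrec n]
  unfold dotProduct Matrix.mulVec
  unfold dotProduct
  rw [Finset.sum_congr rfl]
  intro q _
  rw [Finset.mul_sum, Finset.sum_congr rfl]
  intro p _
  show I q * ((M ^ n) q p * F p) = _
  by_cases hI : I q = 0
  · simp [Itrim, hI]
  by_cases hF : F p = 0
  · simp [Ftrim, hF]
  by_cases hM : (M ^ n) q p = 0
  · rw [hM]
    by_cases hq : Trim M I F q
    · by_cases hp : Trim M I F p
      · rw [← pow_trim_eq M I F n hq hp, hM]; ring
      · simp [Ftrim, hp]
    · simp [Itrim, hq]
  · -- all nonzero: q and p are trim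
    have hwalk : AWalk M q p n := pow_walk M M (fun _ _ h => h) n q p hM
    have hq : Trim M I F q := ⟨⟨q, hI, AReach.refl M q⟩, ⟨p, hF, ⟨n, hwalk⟩⟩⟩
    have hp : Trim M I F p := ⟨⟨q, hI, ⟨n, hwalk⟩⟩, ⟨p, hF, AReach.refl M p⟩⟩
    rw [← pow_trim_eq M I F n hq hp]
    simp [Itrim, Ftrim, hq, hp]
    ring

lemma unique_cycle_succ (hamb : PolyAmbiguous M I F) {q a b : Fin d}
    (hq : Trim M I F q) (ha : M q a ≠ 0) (hra : AReach M a q)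
    (hb : M q b ≠ 0) (hrb : AReach M b q) : a = b := by
  classical
  by_contra hab
  -- build a cyclic walk function from a first-step witness
  have mkcyc : ∀ a' : Fin d, M q a' ≠ 0 → AReach M a' q →
      ∃ l1 : ℕ, 1 ≤ l1 ∧ ∃ xc : ℕ → Fin d,
        xc 0 = q ∧ (∀ t s, l1 ∣ t → xc (t + s) = xc s) ∧
        (∀ t, M (xc t) (xc (t+1)) ≠ 0) ∧ xc 1 = a' := by
    intro a' ha' hra'
    obtain ⟨na, wa, hwa0, hwan, hwas⟩ := hra'
    set l1 := na + 1 with hl1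
    set xw : ℕ → Fin d := fun i => if i = 0 then q else wa (i - 1) with hxw
    have hxw0 : xw 0 = q := by simp [hxw]
    have hxwl : xw l1 = q := by simp [hxw, hl1, hwan]
    have hxws : ∀ t < l1, M (xw t) (xw (t+1)) ≠ 0 := by
      intro t ht
      by_cases h0 : t = 0
      · subst h0; simpa [hxw, hwa0] using ha'
      · have h1 : t - 1 < na := by omega
        have hstep := hwas (t-1) h1
        have e1 : xw t = wa (t-1) := by simp [hxw, h0]
        have e2 : xw (t+1) = wa (t - 1 + 1) := by
          have h2 : t + 1 - 1 = t - 1 + 1 := by omega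
          simp only [hxw]
          rw [if_neg (by omega), h2]
        rw [e1, e2]; exact hstep
    have hl1pos : 0 < l1 := by omega
    refine ⟨l1, by omega, fun t => xw (t % l1), by simp [Nat.zero_mod, hxw0], ?_, ?_, ?_⟩
    · intro t s hts
      show xw ((t + s) % l1) = xw (s % l1)
      obtain ⟨c, rfl⟩ := hts
      rw [Nat.mul_add_mod]
    · intro t
      set st := t % l1 with hst
      have hstlt : st < l1 := Nat.mod_lt _ hl1pos
      have e3 : xw ((t+1) % l1) = xw (st + 1) := by
        have hdm := Nat.div_add_mod t l1
        have h6 : t + 1 = (st + 1) + l1 * (t / l1) := by omega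
        by_cases h5 : st + 1 = l1
        · rw [h6, Nat.add_mul_mod_self_left, h5, Nat.mod_self, hxw0, hxwl]
        · rw [h6, Nat.add_mul_mod_self_left, Nat.mod_eq_of_lt (by omega)]
      show M (xw (t % l1)) (xw ((t+1) % l1)) ≠ 0
      rw [← hst, e3]
      exact hxws st hstlt
    · by_cases h7 : l1 = 1
      · have h8 : na = 0 := by omega
        have h9 : a' = q := by rw [← hwa0, ← hwan, h8]
        simp [h7, Nat.mod_self, hxw0, h9]
      · have h8 : 1 % l1 = 1 := Nat.mod_eq_of_lt (by omega)
        show xw (1 % l1) = a'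
        rw [h8]
        simp only [hxw]
        rw [if_neg (by omega)]
        simpa using hwa0
  obtain ⟨l1, hl1, xc, hxc0, hxcp, hxcs, hxc1⟩ := mkcyc a ha hra
  obtain ⟨l2, hl2, yc, hyc0, hycp, hycs, hyc1⟩ := mkcyc b hb hrb
  set ll := l1 * l2 with hll
  have hlla : l1 ∣ ll := Dvd.intro l2 rfl
  have hllb : l2 ∣ ll := Dvd.intro_left l1 rfl
  have hll2 : 2 ≤ ll := by
    rcases Nat.lt_or_ge ll 2 with h | h
    · exfalso
      have h' : l1 * l2 < 2 := hll ▸ h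
      have ha1 : l1 ≤ l1 * l2 := Nat.le_mul_of_pos_right l1 (by omega)
      have hb1 : l2 ≤ l1 * l2 := Nat.le_mul_of_pos_left l2 (by omega)
      have ha2 : l1 < 2 := lt_of_le_of_lt ha1 h'
      have hb2 : l2 < 2 := lt_of_le_of_lt hb1 h'
      have e1 : l1 = 1 := by omega
      have e2 : l2 = 1 := by omega
      have hxa : xc 1 = xc 0 := by
        have := hxcp 1 0 (by rw [e1])
        simpa using this
      have hyb : yc 1 = yc 0 := by
        have := hycp 1 0 (by rw [e2])
        simpa using this
      apply hab
      rw [← hxc1, ← hyc1, hxa, hyb, hxc0, hyc0]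
    · exact h
  set cy : Bool → ℕ → Fin d := fun c t => if c then xc t else yc t with hcy
  have hcyq : ∀ c t, ll ∣ t → cy c t = q := by
    intro c t ht
    have h1 : xc t = q := by
      have := hxcp t 0 (dvd_trans hlla ht)
      simpa [hxc0] using this
    have h2 : yc t = q := by
      have := hycp t 0 (dvd_trans hllb ht)
      simpa [hyc0] using this
    cases c <;> simp [hcy, h1, h2]
  have hcys : ∀ c t, M (cy c t) (cy c (t+1)) ≠ 0 := by
    intro c t; cases c <;> simp [hcy] <;> [exact hycs t; exact hxcs t]
  have hcy1 : ∀ c t, ll ∣ t → cy c (t+1) = (if c then a else b) := by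
    intro c t ht
    have h1 : xc (t+1) = a := by rw [hxcp t 1 (dvd_trans hlla ht), hxc1]
    have h2 : yc (t+1) = b := by rw [hycp t 1 (dvd_trans hllb ht), hyc1]
    cases c <;> simp [hcy, h1, h2]
  -- prefix and suffix
  obtain ⟨q0, hI0, ⟨np, wp, hwp0, hwpn, hwps⟩⟩ := hq.1
  obtain ⟨qf, hFf, ⟨ns, ws0, hws0, hwsn, hwss⟩⟩ := hq.2
  obtain ⟨P, hP⟩ := hamb
  obtain ⟨k, hk1, hklt⟩ := nat_poly_lt_two_pow' P (np + ns) ll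
  set n := np + k * ll + ns with hn
  have hkll : 1 ≤ k * ll := by
    have := Nat.mul_le_mul hk1 (by omega : 1 ≤ ll)
    omega
  set W : (ℕ → Bool) → ℕ → Fin d := fun v m =>
    if m < np then wp m
    else if m - np < k * ll then cy (v ((m - np)/ll)) (m - np)
    else ws0 (m - np - k*ll) with hW
  have hW0 : ∀ v, W v 0 = q0 := by
    intro v
    by_cases h : 0 < np
    · simp [hW, h, hwp0]
    · have hnp : np = 0 := by omega
      have hqq : q0 = q := by rw [← hwp0, ← hwpn, hnp]
      simp only [hW]
      rw [if_neg (by omega), if_pos (by omega)]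
      rw [hcyq _ _ (by simp), hqq]
  have hWn : ∀ v, W v n = qf := by
    intro v
    simp only [hW]
    rw [if_neg (by omega), if_neg (by omega)]
    have : n - np - k * ll = ns := by omega
    rw [this, hwsn]
  have hWs : ∀ v, ∀ i, i < n → M (W v i) (W v (i+1)) ≠ 0 := by
    intro v i hi
    by_cases c1 : i + 1 < np
    · have c1' : i < np := by omega
      simp only [hW]
      rw [if_pos c1', if_pos c1]
      exact hwps i (by omega)
    · by_cases c2 : i + 1 = np
      · have c1' : i < np := by omega
        have e1 : W v i = wp i := by simp [hW, c1']
        have e2 : W v (i+1) = q := by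
          simp only [hW]
          rw [if_neg (by omega), if_pos (by omega)]
          have h3 : i + 1 - np = 0 := by omega
          rw [h3]
          exact hcyq _ _ (by simp)
        rw [e1, e2, ← hwpn, ← c2]
        exact hwps i (by omega)
      · have hinp : np ≤ i := by omega
        have harg : i + 1 - np = i - np + 1 := by omega
        by_cases c3 : i - np + 1 < k * ll
        · have c3' : i - np < k * ll := by omega
          have e1 : W v i = cy (v ((i - np)/ll)) (i - np) := by
            simp only [hW]
            rw [if_neg (by omega), if_pos c3']
          have e2 : W v (i+1) = cy (v ((i - np + 1)/ll)) (i - np + 1) := by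
            simp only [hW]
            rw [if_neg (by omega), harg, if_pos c3]
          by_cases c4 : ll ∣ (i - np + 1)
          · have e3 : cy (v ((i - np + 1)/ll)) (i - np + 1) = q := hcyq _ _ c4
            have e4 : cy (v ((i - np)/ll)) (i - np + 1) = q := hcyq _ _ c4
            rw [e1, e2, e3, ← e4]
            exact hcys _ (i - np)
          · have e5 : (i - np + 1)/ll = (i - np)/ll := by
              rw [Nat.succ_div, if_neg c4]
              omega
            rw [e1, e2, e5]
            exact hcys _ (i - np)
        · by_cases c5 : i - np + 1 = k * ll
          · have c3' : i - np < k * ll := by omega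
            have e1 : W v i = cy (v ((i - np)/ll)) (i - np) := by
              simp only [hW]
              rw [if_neg (by omega), if_pos c3']
            have e2 : W v (i+1) = ws0 0 := by
              simp only [hW]
              rw [if_neg (by omega), harg, if_neg (by omega)]
              congr 1
              omega
            have c4 : ll ∣ (i - np + 1) := by rw [c5]; exact dvd_mul_left ll k
            have e4 : cy (v ((i - np)/ll)) (i - np + 1) = q := hcyq _ _ c4
            rw [e1, e2, hws0, ← e4]
            exact hcys _ (i - np)
          · have c6 : k * ll ≤ i - np := by omega
            have e1 : W v i = ws0 (i - np - k * ll) := by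
              simp only [hW]
              rw [if_neg (by omega), if_neg (by omega)]
            have e2 : W v (i+1) = ws0 (i - np - k * ll + 1) := by
              simp only [hW]
              rw [if_neg (by omega), harg, if_neg (by omega)]
              congr 1
              omega
            rw [e1, e2]
            exact hwss _ (by omega)
  have hWb : ∀ v (t : ℕ), t < k → W v (np + t*ll + 1) = (if v t then a else b) := by
    intro v t ht
    have h6 : (t+1) * ll ≤ k * ll := Nat.mul_le_mul_right ll (by omega)
    have h7 : (t+1) * ll = t * ll + ll := by ring
    have h8 : t * ll + 1 < k * ll := by omega
    simp only [hW]
    rw [if_neg (by omega), if_pos (by omega)]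
    have h9 : np + t * ll + 1 - np = t * ll + 1 := by omega
    rw [h9]
    have h10 : (t * ll + 1) / ll = t := by
      rw [Nat.mul_comm t ll, Nat.mul_add_div (by omega), Nat.div_eq_of_lt (by omega)]
      omega
    rw [h10]
    exact hcy1 _ _ (dvd_mul_left ll t)
  -- runs
  have hrun : ∀ v : ℕ → Bool, AcceptingRun M I F n (fun i : Fin (n+1) => W v i.val) := by
    intro v
    refine ⟨?_, ?_, ?_⟩
    · show I (W v ((0 : Fin (n+1)).val)) ≠ 0
      rw [Fin.val_zero, hW0 v]
      exact hI0
    · show F (W v ((Fin.last n).val)) ≠ 0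
      rw [Fin.val_last, hWn v]
      exact hFf
    · intro i
      show M (W v (i.castSucc.val)) (W v (i.succ.val)) ≠ 0
      rw [Fin.coe_castSucc, Fin.val_succ]
      exact hWs v i.val i.isLt
  classical
  set ext : (Fin k → Bool) → (ℕ → Bool) := fun v t => if h : t < k then v ⟨t, h⟩ else true with hext
  set Φ : (Fin k → Bool) → {r : Fin (n+1) → Fin d // AcceptingRun M I F n r} :=
    fun v => ⟨fun i : Fin (n+1) => W (ext v) i.val, hrun _⟩ with hPhi
  have hinj : Function.Injective Φ := by
    intro v v' h
    funext t
    have h0 : np + t.val * ll + 1 < n + 1 := by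
      have h6 : (t.val+1) * ll ≤ k * ll := Nat.mul_le_mul_right ll (by omega)
      have h7 : (t.val+1) * ll = t.val * ll + ll := by ring
      omega
    have h1 := congrArg (fun r : {r : Fin (n+1) → Fin d // AcceptingRun M I F n r} =>
      r.val ⟨np + t.val * ll + 1, h0⟩) h
    simp only [hPhi] at h1
    have e1 := hWb (ext v) t.val t.isLt
    have e2 := hWb (ext v') t.val t.isLt
    have e3 : ext v t.val = v t := by simp [hext]
    have e4 : ext v' t.val = v' t := by simp [hext]
    rw [e1, e2, e3, e4] at h1
    by_cases hv : v t <;> by_cases hv' : v' t <;> simp [hv, hv'] at h1 ⊢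
    · exact hab h1
    · exact hab h1.symm
  have hcard : 2^k ≤ ambiguity M I F n := by
    have h1 : Nat.card (Fin k → Bool) = 2^k := by
      rw [Nat.card_eq_fintype_card]
      simp
    calc (2:ℕ)^k = Nat.card (Fin k → Bool) := h1.symm
      _ ≤ Nat.card {r : Fin (n+1) → Fin d // AcceptingRun M I F n r} :=
          Nat.card_le_card_of_injective Φ hinj
      _ = ambiguity M I F n := rfl
  have hfin := hP n
  have : np + ns + k * ll = n := by omega
  rw [this] at hklt
  omega

/-! ### the unique cycle successor and periodicity -/

def CycAt (q a : Fin d) : Prop := M q a ≠ 0 ∧ AReach M a q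

noncomputable def csucc (q : Fin d) : Fin d :=
  if h : ∃ a, CycAt M q a then h.choose else q

lemma csucc_spec {q : Fin d} (h : ∃ a, CycAt M q a) : CycAt M q (csucc M q) := by
  rw [csucc, dif_pos h]
  exact h.choose_spec

lemma csucc_eq (hamb : PolyAmbiguous M I F) {q a : Fin d} (hq : Trim M I F q)
    (h : CycAt M q a) : csucc M q = a := by
  have hs := csucc_spec M (⟨a, h⟩ : ∃ a, CycAt M q a)
  exact unique_cycle_succ M I F hamb hq hs.1 hs.2 h.1 h.2

lemma walk_segment {w : ℕ → Fin d} {nn : ℕ} (hws : ∀ i < nn, M (w i) (w (i+1)) ≠ 0)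
    {j j' : ℕ} (h1 : j ≤ j') (h2 : j' ≤ nn) : AWalk M (w j) (w j') (j' - j) := by
  refine ⟨fun t => w (j + t), by simp, by show w (j + (j' - j)) = w j'; rw [Nat.add_sub_cancel' h1], fun t ht => ?_⟩
  show M (w (j + t)) (w (j + (t + 1))) ≠ 0
  have := hws (j+t) (by omega)
  have e : j + (t + 1) = j + t + 1 := by omega
  rw [e]
  exact this

/-- any closed walk at a trim state follows `csucc` -/
lemma walk_follows (hamb : PolyAmbiguous M I F) {q : Fin d} (hq : Trim M I F q)
    {nn : ℕ} {w : ℕ → Fin d} (hw0 : w 0 = q) (hwn : w nn = q)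
    (hws : ∀ i < nn, M (w i) (w (i+1)) ≠ 0) :
    ∀ i ≤ nn, w i = (csucc M)^[i] q := by
  intro i
  induction i with
  | zero => intro _; simpa using hw0
  | succ i ih =>
    intro hi
    have hwi : w i = (csucc M)^[i] q := ih (by omega)
    have hreach_qi : AReach M q (w i) := by
      have := walk_segment M hws (Nat.zero_le i) (by omega)
      rw [hw0] at this
      exact ⟨i - 0, this⟩
    have hreach_iq : AReach M (w i) q := by
      have := walk_segment M hws (le_of_lt (by omega : i < nn)) (le_refl nn)
      rw [hwn] at this
      exact ⟨nn - i, this⟩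
    have htrim : Trim M I F (w i) := hq.of_reach M I F hreach_qi hreach_iq
    have hcyc : CycAt M (w i) (w (i+1)) := by
      constructor
      · exact hws i (by omega)
      · -- reach (w (i+1)) q then q to (w i)
        have h1 : AReach M (w (i+1)) q := by
          have := walk_segment M hws (by omega : i + 1 ≤ nn) (le_refl nn)
          rw [hwn] at this
          exact ⟨nn - (i+1), this⟩
        exact h1.trans M hreach_qi
    have := csucc_eq M I F hamb htrim hcyc
    rw [Function.iterate_succ_apply', ← hwi, this]

/-- a trim state on a cycle returns to itself after `d!` steps of `csucc` -/
lemma csucc_iter_factorial (hamb : PolyAmbiguous M I F) {q : Fin d}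
    (hq : Trim M I F q) (hc : ∃ a, CycAt M q a) :
    (csucc M)^[d.factorial] q = q := by
  classical
  -- first, some return time m ≥ 1
  obtain ⟨a, hca, hcr⟩ := hc
  obtain ⟨m0, wb, hwb0, hwbn, hwbs⟩ := hcr
  set w : ℕ → Fin d := fun i => if i = 0 then q else wb (i - 1) with hwdef
  have hw0 : w 0 = q := by simp [hwdef]
  have hwn : w (m0 + 1) = q := by simp [hwdef, hwbn]
  have hws : ∀ i < m0 + 1, M (w i) (w (i+1)) ≠ 0 := by
    intro i hi
    by_cases h0 : i = 0
    · subst h0; simpa [hwdef, hwb0] using hca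
    · have e1 : w i = wb (i-1) := by simp [hwdef, h0]
      have e2 : w (i+1) = wb (i-1+1) := by
        simp only [hwdef]
        rw [if_neg (by omega)]
        congr 1
        omega
      rw [e1, e2]
      exact hwbs (i-1) (by omega)
  have hret : (csucc M)^[m0+1] q = q := by
    have := walk_follows M I F hamb hq hw0 hwn hws (m0+1) (le_refl _)
    rw [← this, hwn]
  -- minimal period
  have hex : ∃ n, 1 ≤ n ∧ (csucc M)^[n] q = q := ⟨m0+1, by omega, hret⟩
  set lq := Nat.find hex with hlq
  obtain ⟨hlq1, hlqq⟩ := Nat.find_spec hex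
  have hmin : ∀ n, 1 ≤ n → (csucc M)^[n] q = q → lq ≤ n := by
    intro n h1 h2
    exact Nat.find_le ⟨h1, h2⟩
  have hmult : ∀ c, (csucc M)^[lq * c] q = q := by
    intro c
    induction c with
    | zero => simp
    | succ c ih =>
      have : lq * (c+1) = lq + lq * c := by ring
      rw [this, Function.iterate_add_apply, ih, hlqq]
  -- lq ≤ d via injectivity of the orbit
  have haux : ∀ i j, i < j → j < lq → (csucc M)^[i] q ≠ (csucc M)^[j] q := by
    intro i j hij hj heq
    have h1 : (csucc M)^[(lq - j) + i] q = (csucc M)^[(lq - j) + j] q := by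
      rw [Function.iterate_add_apply, Function.iterate_add_apply, heq]
    have h2 : (lq - j) + j = lq := by omega
    rw [h2, hlqq] at h1
    have h3 := hmin ((lq - j) + i) (by omega) h1
    omega
  have hinj : Function.Injective (fun i : Fin lq => (csucc M)^[i.val] q) := by
    intro i j h
    by_contra hne
    rcases Nat.lt_or_ge i.val j.val with h1 | h1
    · exact haux i.val j.val h1 j.isLt h
    · rcases Nat.lt_or_ge j.val i.val with h2 | h2
      · exact haux j.val i.val h2 i.isLt h.symm
      · exact hne (Fin.ext (by omega))
  have hld : lq ≤ d := by
    have := Fintype.card_le_of_injective _ hinj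
    simpa using this
  have hdvd : lq ∣ d.factorial := Nat.dvd_factorial (by omega) hld
  obtain ⟨c, hc'⟩ := hdvd
  rw [hc']
  exact hmult c

/-! ### structure of the L-th power and EP entries -/

noncomputable def Bmat : Matrix (Fin d) (Fin d) ℚ := (Ntrim M I F) ^ d.factorial

noncomputable def rk (q : Fin d) : ℕ :=
  (Finset.univ.filter (fun x => AReach M x q ∧ ¬ AReach M q x)).card

lemma rk_lt {a b : Fin d} (h1 : AReach M a b) (h2 : ¬ AReach M b a) : rk M a < rk M b := by
  apply Finset.card_lt_card
  rw [Finset.ssubset_iff_of_subset]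
  · refine ⟨a, ?_, ?_⟩
    · rw [Finset.mem_filter]
      exact ⟨Finset.mem_univ a, h1, h2⟩
    · rw [Finset.mem_filter]
      rintro ⟨-, -, hcon⟩
      exact hcon (AReach.refl M a)
  · intro x hx
    rw [Finset.mem_filter] at hx ⊢
    obtain ⟨-, hxa, hax⟩ := hx
    refine ⟨Finset.mem_univ x, hxa.trans M h1, fun hbx => hax (h1.trans M hbx)⟩

lemma Bmat_offdiag (hamb : PolyAmbiguous M I F) {q q' : Fin d} (hne : q ≠ q')
    (hB : Bmat M I F q q' ≠ 0) : rk M q < rk M q' := by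
  classical
  set L := d.factorial with hLdef
  have hLpos : 0 < L := Nat.factorial_pos d
  obtain ⟨w1, h10, h1n, h1s⟩ :=
    pow_walk M (Ntrim M I F) (Ntrim_le M I F) L q q' hB
  have hreach : AReach M q q' := ⟨L, w1, h10, h1n, h1s⟩
  -- q is trim
  have htrimq : Trim M I F q := by
    obtain ⟨m, hm⟩ : ∃ m, L = m + 1 := ⟨L - 1, by omega⟩
    have hB' := hB
    rw [Bmat, ← hLdef, hm, pow_succ', Matrix.mul_apply] at hB'
    obtain ⟨x, -, hx⟩ := Finset.exists_ne_zero_of_sum_ne_zero hB'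
    have : Ntrim M I F q x ≠ 0 := fun h0 => hx (by rw [h0, zero_mul])
    exact (Ntrim_trim M I F this).1
  apply rk_lt M hreach
  intro h2
  obtain ⟨m2, w2, h20, h2n, h2s⟩ := h2
  set wtot : ℕ → Fin d := fun i => if i ≤ L then w1 i else w2 (i - L) with hwt
  have htot0 : wtot 0 = q := by simp [hwt, h10]
  have htotL : wtot L = q' := by simp [hwt, h1n]
  have htotn : wtot (L + m2) = q := by
    by_cases h : m2 = 0
    · subst h; simp [hwt, h1n, ← h20, ← h2n]
    · have hc : ¬ (L + m2 ≤ L) := by omega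
      simp [hwt, hc, h2n]
  have htots : ∀ i < L + m2, M (wtot i) (wtot (i+1)) ≠ 0 := by
    intro i hi
    by_cases hA : i + 1 ≤ L
    · have hA' : i ≤ L := by omega
      have := h1s i (by omega)
      simpa [hwt, hA, hA'] using this
    · by_cases hBc : i ≤ L
      · have hiL : i = L := by omega
        have hc : ¬ (i + 1 ≤ L) := by omega
        have hstep := h2s 0 (by omega)
        have e1 : wtot i = q' := by rw [hiL]; exact htotL
        have e2 : wtot (i+1) = w2 1 := by
          simp only [hwt]
          rw [if_neg (by omega)]
          congr 1
          omega
        rw [e1, e2, ← h20]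
        simpa using hstep
      · have h3 : ¬ (i + 1 ≤ L) := by omega
        have h4 : i + 1 - L = (i - L) + 1 := by omega
        have := h2s (i - L) (by omega)
        simpa [hwt, hBc, h3, h4] using this
  have hfol := walk_follows M I F hamb htrimq htot0 htotn htots L (by omega)
  have hcy : ∃ a, CycAt M q a := by
    refine ⟨wtot 1, ?_, ?_⟩
    · have := htots 0 (by omega)
      rwa [htot0] at this
    · have := walk_segment M htots (by omega : 1 ≤ L + m2) (le_refl _)
      rw [htotn] at this
      exact ⟨L + m2 - 1, this⟩
  have hper := csucc_iter_factorial M I F hamb htrimq hcy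
  rw [← hLdef] at hper
  rw [htotL, hper] at hfol
  exact hne hfol.symm

lemma EP_Bpow (hamb : PolyAmbiguous M I F) (q' q : Fin d) :
    EP (fun n => ((Bmat M I F) ^ n) q q') := by
  classical
  suffices main : ∀ m (q' : Fin d), rk M q' < m → ∀ q, EP (fun n => ((Bmat M I F) ^ n) q q') by
    exact main (rk M q' + 1) q' (by omega) q
  intro m
  induction m with
  | zero => intro q' h; exact absurd h (Nat.not_lt_zero _)
  | succ m ih =>
    intro q' hq' q
    have hrec : ∀ n, ((Bmat M I F)^(n+1)) q q'
        = Bmat M I F q' q' * ((Bmat M I F)^n) q q'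
          + ∑ p, ((Bmat M I F)^n) q p * (if p = q' then 0 else Bmat M I F p q') := by
      intro n
      rw [pow_succ, Matrix.mul_apply]
      have hsplit : ∀ p ∈ Finset.univ, ((Bmat M I F)^n) q p * Bmat M I F p q'
          = (if p = q' then ((Bmat M I F)^n) q p * Bmat M I F q' q' else 0)
            + ((Bmat M I F)^n) q p * (if p = q' then 0 else Bmat M I F p q') := by
        intro p _
        by_cases h : p = q' <;> simp [h]
      rw [Finset.sum_congr rfl hsplit, Finset.sum_add_distrib, Finset.sum_ite_eq' Finset.univ q'
        (fun p => ((Bmat M I F)^n) q p * Bmat M I F q' q')]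
      simp [mul_comm]
    have hh : EP (fun n => ∑ p, ((Bmat M I F)^n) q p * (if p = q' then 0 else Bmat M I F p q')) := by
      apply EP_finsum
      intro p _
      by_cases hp : p = q'
      · exact EP_congr EP_zero (fun n => by simp [hp])
      · by_cases hz : Bmat M I F p q' = 0
        · exact EP_congr EP_zero (fun n => by simp [hp, hz])
        · have hrk : rk M p < rk M q' := Bmat_offdiag M I F hamb hp hz
          have := ih p (by omega) q
          exact EP_congr (EP_mul_const (Bmat M I F p q') this) (fun n => by rw [if_neg hp])
    exact EP_resolvent hrec hh

end Auto

/-- Every sequence recognized by a polynomially ambiguous weighted automaton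
over a unary alphabet belongs to PolyRat. -/
theorem polyAmbiguous_wa_recognized_mem_polyRat (u : ℕ → ℚ) (d : ℕ)
    (M : Matrix (Fin d) (Fin d) ℚ) (I F : Fin d → ℚ)
    (hrec : Recognizes M I F u) (hamb : PolyAmbiguous M I F) :
    PolyRat u := by
  classical
  have hL1 : 1 ≤ d.factorial := Nat.factorial_pos d
  have key : ∀ r : ℕ, EP (fun n => u (d.factorial * n + r)) := by
    intro r
    have hm : ∀ n : ℕ, (Ntrim M I F)^(d.factorial * n + r)
        = (Bmat M I F)^n * (Ntrim M I F)^r := by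
      intro n
      rw [pow_add, pow_mul]
      rfl
    have hrep : ∀ n, u (d.factorial * n + r) = ∑ q : Fin d, ∑ p : Fin d,
        Itrim M I F q * (((Bmat M I F)^n * (Ntrim M I F)^r) q p) * Ftrim M I F p := by
      intro n
      rw [u_rep M I F hrec (d.factorial * n + r)]
      apply Finset.sum_congr rfl
      intro q _
      apply Finset.sum_congr rfl
      intro p _
      rw [hm n]
    apply EP_congr _ hrep
    apply EP_finsum
    intro q _
    apply EP_finsum
    intro p _
    have h1 : EP (fun n => ∑ p' : Fin d, ((Bmat M I F)^n) q p' * ((Ntrim M I F)^r) p' p) := by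
      apply EP_finsum
      intro p' _
      exact EP_mul_const _ (EP_Bpow M I F hamb p' q)
    have h2 := EP_mul_const (Ftrim M I F p) (EP_smul (Itrim M I F q) h1)
    apply EP_congr h2
    intro n
    rw [Matrix.mul_apply]
  apply PolyRat.shuffle d.factorial hL1 (fun (i : Fin d.factorial) (n : ℕ) => u (d.factorial * n + i.val)) u
  · intro n i; rfl
  · intro i; exact EP_polyRat (key i.val)
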